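/- Let $f$ be twice differentiable on $[0,\infty)$ with $f(0)=f'(0)=0$ and suppose $Z$ has density $2xe^{-x^2}$ on $(0,\infty)$ such that $\mathbb{E}|f''(Z)|$, $\mathbb{E}|Zf'(Z)|$ and $\mathbb{E}|f(Z)|$ are finite. Then $\mathbb{E}\left[\tfrac{1}{2} f''(Z) - Z f'(Z) + f(Z)\right] = 0$. -/

import Mathlib

open Real MeasureTheory

open Set Filter Topology
theorem stein_identity_K_half {Ω : Type*} [MeasurableSpace Ω] (P : Measure Ω)
    [IsProbabilityMeasure P] (Z : Ω → ℝ) (hZm : Measurable Z)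
    (hZlaw : Measure.map Z P = volume.withDensity
      (fun x => ENNReal.ofReal (if 0 < x then 2 * x * Real.exp (-x^2) else 0)))
    (f f' f'' : ℝ → ℝ)
    (hf' : ∀ x, 0 ≤ x → HasDerivAt f (f' x) x)
    (hf'' : ∀ x, 0 ≤ x → HasDerivAt f' (f'' x) x)
    (hf0 : f 0 = 0) (hf'0 : f' 0 = 0)
    (hint1 : Integrable (fun ω => f'' (Z ω)) P)
    (hint2 : Integrable (fun ω => Z ω * f' (Z ω)) P)
    (hint3 : Integrable (fun ω => f (Z ω)) P) :
    ∫ ω, ((1/2) * f'' (Z ω) - Z ω * f' (Z ω) + f (Z ω)) ∂P = 0 := by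
  -- real density
  set κ : ℝ → ℝ := fun x => if 0 < x then 2 * x * Real.exp (-x^2) else 0 with hκdef
  have hκnn : ∀ x, 0 ≤ κ x := by
    intro x
    simp only [hκdef]
    split_ifs with h
    · positivity
    · exact le_rfl
  set μ : Measure ℝ := volume.withDensity (fun x => ENNReal.ofReal (κ x)) with hμdef
  have hZlaw' : Measure.map Z P = μ := hZlaw
  have hκmeas : Measurable κ := by
    apply Measurable.ite measurableSet_Ioi
    · fun_prop
    · exact measurable_const
  -- μ lives on (0, ∞)
  have hae : ∀ᵐ x ∂μ, x ∈ Ioi (0:ℝ) := by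
    rw [hμdef, ae_iff]
    have h1 : {x : ℝ | ¬ x ∈ Ioi (0:ℝ)} = Iic 0 := by ext x; simp
    rw [h1, withDensity_apply _ measurableSet_Iic]
    have h2 : ∀ᵐ x ∂(volume.restrict (Iic (0:ℝ))), ENNReal.ofReal (κ x) = 0 := by
      filter_upwards [ae_restrict_mem measurableSet_Iic] with x hx
      have : ¬ (0:ℝ) < x := not_lt.2 hx
      simp [hκdef, this]
    rw [lintegral_congr_ae h2]
    simp
  have hrestrict : μ.restrict (Ioi 0) = μ :=
    Measure.restrict_eq_self_of_ae_mem hae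
  -- a.e. strong measurability of f, f', f'' w.r.t. μ
  have hfc : ContinuousOn f (Ioi 0) := fun x hx => ((hf' x hx.le).continuousAt).continuousWithinAt
  have hf'c : ContinuousOn f' (Ioi 0) := fun x hx => ((hf'' x hx.le).continuousAt).continuousWithinAt
  have hfm : AEStronglyMeasurable f μ := by
    have h := hfc.aemeasurable (μ := μ) measurableSet_Ioi
    rw [hrestrict] at h
    exact h.aestronglyMeasurable
  have hf'm : AEStronglyMeasurable f' μ := by
    have h := hf'c.aemeasurable (μ := μ) measurableSet_Ioi
    rw [hrestrict] at h
    exact h.aestronglyMeasurable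
  have hf''m : AEStronglyMeasurable f'' μ := by
    refine ⟨deriv f', (measurable_deriv f').stronglyMeasurable, ?_⟩
    filter_upwards [hae] with x hx
    exact ((hf'' x hx.le).deriv).symm
  have hidm : AEStronglyMeasurable (fun x : ℝ => x) μ :=
    aestronglyMeasurable_id
  -- the integrand and its transfer to an integral over (0, ∞)
  set F : ℝ → ℝ := fun x => (1/2) * f'' x - x * f' x + f x with hFdef
  have hFm : AEStronglyMeasurable F μ :=
    ((hf''m.const_mul _).sub (hidm.mul hf'm)).add hfm
  have hFint : Integrable (fun ω => F (Z ω)) P := (hint1.const_mul _).sub hint2 |>.add hint3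
  have hFintμ : Integrable F μ := by
    rw [← hZlaw'] at hFm ⊢
    exact (integrable_map_measure hFm hZm.aemeasurable).mpr hFint
  -- generic transfer of integrability to the Lebesgue measure
  have key : ∀ g : ℝ → ℝ, Integrable g μ → Integrable (fun x => g x * κ x) volume := by
    intro g hg
    rw [hμdef, integrable_withDensity_iff (by fun_prop) (by filter_upwards with x; exact ENNReal.ofReal_lt_top)] at hg
    refine hg.congr ?_
    filter_upwards with x
    rw [ENNReal.toReal_ofReal (hκnn x)]
  have hFκ : Integrable (fun x => F x * κ x) volume := key F hFintμ
  have hf'κ : Integrable (fun x => (x * f' x) * κ x) volume := by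
    refine key _ ?_
    rw [← hZlaw'] at hf'm hidm ⊢
    exact (integrable_map_measure (aestronglyMeasurable_id.mul hf'm) hZm.aemeasurable).mpr hint2
  have hfκ : Integrable (fun x => f x * κ x) volume := by
    refine key _ ?_
    rw [← hZlaw'] at hfm ⊢
    exact (integrable_map_measure hfm hZm.aemeasurable).mpr hint3
  -- the goal integral equals ∫_{(0,∞)} F·κ
  have step1 : ∫ ω, ((1/2) * f'' (Z ω) - Z ω * f' (Z ω) + f (Z ω)) ∂P
      = ∫ x, F x * κ x := by
    have h1 : ∫ ω, ((1/2) * f'' (Z ω) - Z ω * f' (Z ω) + f (Z ω)) ∂P = ∫ x, F x ∂μ := by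
      rw [← hZlaw', integral_map hZm.aemeasurable (hZlaw' ▸ hFm)]
    rw [h1, hμdef]
    have hcoe : (fun x : ℝ => ENNReal.ofReal (κ x)) = fun x => ((Real.toNNReal (κ x)) : ENNReal) := rfl
    rw [hcoe, integral_withDensity_eq_integral_smul (hκmeas.real_toNNReal) F]
    congr 1
    funext x
    rw [NNReal.smul_def, Real.coe_toNNReal _ (hκnn x), smul_eq_mul, mul_comm]
  -- the function whose derivative is F·(2x e^{-x²})
  set G : ℝ → ℝ := fun x => F x * (2 * x * Real.exp (-x^2)) with hGdef
  set g : ℝ → ℝ := fun x => x * f' x * Real.exp (-x^2) - f x * Real.exp (-x^2) with hgdef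
  have hg0 : g 0 = 0 := by simp [hgdef, hf0]
  have hgderiv : ∀ x : ℝ, 0 ≤ x → HasDerivAt g (G x) x := by
    intro x hx
    have hp : HasDerivAt (fun y : ℝ => -y^2) (-(2*x)) x := by
      simpa [Pi.neg_def] using (hasDerivAt_pow 2 x).neg
    have he : HasDerivAt (fun y : ℝ => Real.exp (-y^2)) (Real.exp (-x^2) * (-(2*x))) x := hp.exp
    have h1 : HasDerivAt (fun y : ℝ => y * f' y) (1 * f' x + x * f'' x) x :=
      (hasDerivAt_id x).mul (hf'' x hx)
    have h2 : HasDerivAt (fun y => y * f' y * Real.exp (-y^2) - f y * Real.exp (-y^2)) _ x :=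
      (h1.mul he).sub ((hf' x hx).mul he)
    convert h2 using 1
    simp only [hGdef, hFdef]
    ring
  -- integrability of G on (0, ∞)
  have hGκ : Set.EqOn (fun x => F x * κ x) G (Ioi 0) := by
    intro x hx
    simp only [hGdef, hκdef]
    rw [if_pos (mem_Ioi.mp hx)]
  have hGint : IntegrableOn G (Ioi 0) volume :=
    (hFκ.integrableOn).congr_fun hGκ measurableSet_Ioi
  -- FTC
  have hFTC : ∀ b : ℝ, 0 ≤ b → ∫ x in (0:ℝ)..b, G x = g b := by
    intro b hb
    have hii : IntervalIntegrable G volume 0 b := by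
      rw [intervalIntegrable_iff_integrableOn_Ioc_of_le hb]
      exact hGint.mono_set Ioc_subset_Ioi_self
    have h := intervalIntegral.integral_eq_sub_of_hasDerivAt (f := g) (f' := G)
      (fun x hx => by
        rw [uIcc_of_le hb] at hx
        exact hgderiv x hx.1) hii
    rw [h, hg0, sub_zero]
  set I : ℝ := ∫ x in Ioi (0:ℝ), G x with hIdef
  have htends : Tendsto g atTop (𝓝 I) := by
    have h := intervalIntegral_tendsto_integral_Ioi 0 hGint tendsto_id
    refine h.congr' ?_
    filter_upwards [eventually_ge_atTop (0:ℝ)] with b hb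
    exact hFTC b hb
  -- the limit must be zero
  have hI0 : I = 0 := by
    by_contra hI
    have habs : Tendsto (fun b => |g b|) atTop (𝓝 |I|) := htends.abs
    have hhalf : |I| / 2 < |I| := by
      have : 0 < |I| := abs_pos.mpr hI
      linarith
    obtain ⟨a, ha⟩ := (habs.eventually (eventually_ge_nhds hhalf)).exists_forall_of_atTop
    set A : ℝ := max a 1 with hAdef
    have hA1 : (1:ℝ) ≤ A := le_max_right a 1
    have hA0 : (0:ℝ) < A := lt_of_lt_of_le one_pos hA1
    -- g x / x is integrable on (1, ∞)
    have hbound : IntegrableOn (fun x => |x * f' x * κ x| + |f x * κ x|) (Ioi 1) volume :=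
      ((hf'κ.abs).add (hfκ.abs)).integrableOn
    have hgc : ContinuousOn g (Ioi 0) := by
      have hexp : ContinuousOn (fun y : ℝ => Real.exp (-y^2)) (Ioi 0) := by fun_prop
      exact ((continuousOn_id.mul hf'c).mul hexp).sub (hfc.mul hexp)
    have hgx : IntegrableOn (fun x => g x / x) (Ioi 1) volume := by
      refine Integrable.mono' hbound ?_ ?_
      · exact ((hgc.mono (Ioi_subset_Ioi one_pos.le)).div continuousOn_id
          (fun x hx => ne_of_gt (lt_trans one_pos hx))).aestronglyMeasurable measurableSet_Ioi
      · filter_upwards [ae_restrict_mem measurableSet_Ioi] with x hx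
        have hx1 : (1:ℝ) < x := hx
        have hx0 : (0:ℝ) < x := lt_trans one_pos hx1
        have he : (0:ℝ) < Real.exp (-x^2) := Real.exp_pos _
        have hκx : κ x = 2 * x * Real.exp (-x^2) := if_pos hx0
        have hgb : |g x| ≤ x * |f' x| * Real.exp (-x^2) + |f x| * Real.exp (-x^2) := by
          calc |g x| ≤ |x * f' x * Real.exp (-x^2)| + |f x * Real.exp (-x^2)| := abs_sub _ _
          _ = x * |f' x| * Real.exp (-x^2) + |f x| * Real.exp (-x^2) := by
            rw [abs_mul, abs_mul, abs_mul, abs_of_pos hx0, abs_of_pos he]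
        rw [Real.norm_eq_abs, abs_div, abs_of_pos hx0, div_le_iff₀ hx0, hκx]
        have e1 : |x * f' x * (2 * x * Real.exp (-x^2))| = 2 * x^2 * |f' x| * Real.exp (-x^2) := by
          rw [abs_mul, abs_mul, abs_mul, abs_mul, abs_of_pos hx0, abs_of_pos he]
          rw [abs_of_nonneg (by norm_num : (0:ℝ) ≤ (2:ℝ))]
          ring
        have e2 : |f x * (2 * x * Real.exp (-x^2))| = 2 * x * |f x| * Real.exp (-x^2) := by
          rw [abs_mul, abs_mul, abs_mul, abs_of_pos hx0, abs_of_pos he]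
          rw [abs_of_nonneg (by norm_num : (0:ℝ) ≤ (2:ℝ))]
          ring
        rw [e1, e2]
        have h2x : (1:ℝ) ≤ 2 * x^2 := by nlinarith
        have k1 : x * |f' x| * Real.exp (-x^2) ≤ 2*x^2 * (x * |f' x| * Real.exp (-x^2)) :=
          le_mul_of_one_le_left (by positivity) h2x
        have k2 : |f x| * Real.exp (-x^2) ≤ 2*x^2 * (|f x| * Real.exp (-x^2)) :=
          le_mul_of_one_le_left (by positivity) h2x
        calc |g x| ≤ x * |f' x| * Real.exp (-x^2) + |f x| * Real.exp (-x^2) := hgb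
        _ ≤ 2*x^2 * (x * |f' x| * Real.exp (-x^2)) + 2*x^2 * (|f x| * Real.exp (-x^2)) :=
            add_le_add k1 k2
        _ = (2 * x^2 * |f' x| * Real.exp (-x^2) + 2 * x * |f x| * Real.exp (-x^2)) * x := by ring
    -- hence x⁻¹ would be integrable on (A, ∞)
    have hinv : IntegrableOn (fun x : ℝ => x⁻¹) (Ioi A) volume := by
      have hgxa : IntegrableOn (fun x => |g x / x|) (Ioi 1) volume := hgx.abs
      refine Integrable.mono' ((hgxa.mono_set (Ioi_subset_Ioi hA1)).const_mul (2 / |I|)) ?_ ?_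
      · exact ((continuousOn_id.inv₀ (fun x hx => ne_of_gt (lt_trans hA0 hx)))).aestronglyMeasurable measurableSet_Ioi
      · filter_upwards [ae_restrict_mem measurableSet_Ioi] with x hx
        have hxA : A < x := hx
        have hx0 : (0:ℝ) < x := lt_trans hA0 hxA
        have hIa : |I| / 2 ≤ |g x| := ha x (le_trans (le_max_left a 1) hxA.le)
        have hIpos : 0 < |I| := abs_pos.mpr hI
        rw [Real.norm_eq_abs, abs_of_pos (inv_pos.mpr hx0)]
        have h1 : |I| / 2 * x⁻¹ ≤ |g x| * x⁻¹ :=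
          mul_le_mul_of_nonneg_right hIa (inv_nonneg.mpr hx0.le)
        have h2 : |g x / x| = |g x| * x⁻¹ := by
          rw [abs_div, abs_of_pos hx0, div_eq_mul_inv]
        calc x⁻¹ = (2 / |I|) * (|I| / 2 * x⁻¹) := by field_simp
        _ ≤ (2 / |I|) * (|g x| * x⁻¹) := mul_le_mul_of_nonneg_left h1 (by positivity)
        _ = 2 / |I| * |g x / x| := by rw [h2]
    have hrpow : IntegrableOn (fun x : ℝ => x ^ (-1:ℝ)) (Ioi A) volume :=
      hinv.congr_fun (fun x _ => (Real.rpow_neg_one x).symm) measurableSet_Ioi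
    exact absurd ((integrableOn_Ioi_rpow_iff hA0).mp hrpow) (by norm_num)
  -- assemble
  have h0 : ∀ x : ℝ, x ∉ Ioi (0:ℝ) → F x * κ x = 0 := by
    intro x hx
    have : ¬ (0:ℝ) < x := by simpa using hx
    simp [hκdef, this]
  calc ∫ ω, ((1/2) * f'' (Z ω) - Z ω * f' (Z ω) + f (Z ω)) ∂P
      = ∫ x, F x * κ x := step1
    _ = ∫ x in Ioi (0:ℝ), F x * κ x :=
        (setIntegral_eq_integral_of_forall_compl_eq_zero h0).symm
    _ = ∫ x in Ioi (0:ℝ), G x := setIntegral_congr_fun measurableSet_Ioi hGκ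
    _ = 0 := hI0
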